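/- Fix a nonsingular vector x of V(2n,2) (i.e. Q(x) = 1). The number of nonsingular vectors x' ≠ x such that x + x' is singular, i.e. Q(x + x') = 0 (relation B₂), equals (2^{n−1} + 1)·(2^{n−1} − 1). -/

import Mathlib

/-- The hyperbolic quadratic form on `V(2n,2)`:
`Q x = ∑_{i=0}^{n-1} x (2i) * x (2i+1)`. -/
def Q (n : ℕ) (x : Fin (2*n) → ZMod 2) : ZMod 2 :=
  ∑ i : Fin n, x ⟨2*i.1, by have := i.2; omega⟩ * x ⟨2*i.1+1, by have := i.2; omega⟩

/-- The polar form of `Q`. -/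
def Bf (n : ℕ) (x y : Fin (2*n) → ZMod 2) : ZMod 2 :=
  ∑ i : Fin n, (x ⟨2*i.1, by have := i.2; omega⟩ * y ⟨2*i.1+1, by have := i.2; omega⟩
    + x ⟨2*i.1+1, by have := i.2; omega⟩ * y ⟨2*i.1, by have := i.2; omega⟩)

lemma zmod2_add_self : ∀ a : ZMod 2, a + a = 0 := by decide

lemma zmod2_not_one : ∀ a : ZMod 2, ¬ a = 1 ↔ a = 0 := by decide

lemma zmod2_not_zero : ∀ a : ZMod 2, ¬ a = 0 ↔ a = 1 := by decide

lemma zmod2_cases : ∀ a : ZMod 2, a = 0 ∨ a = 1 := by decide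

lemma zmod2_mul_one : ∀ a b : ZMod 2, a * b = 1 → b = 1 := by decide

lemma vadd_self (n : ℕ) (v : Fin (2*n) → ZMod 2) : v + v = 0 :=
  funext fun i => zmod2_add_self (v i)

lemma Q_add (n : ℕ) (x y : Fin (2*n) → ZMod 2) :
    Q n (x + y) = Q n x + Q n y + Bf n x y := by
  unfold Q Bf
  rw [← Finset.sum_add_distrib, ← Finset.sum_add_distrib]
  refine Finset.sum_congr rfl fun i _ => ?_
  simp only [Pi.add_apply]
  ring

lemma Bf_add_right (n : ℕ) (x y z : Fin (2*n) → ZMod 2) :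
    Bf n x (y + z) = Bf n x y + Bf n x z := by
  unfold Bf
  rw [← Finset.sum_add_distrib]
  refine Finset.sum_congr rfl fun i _ => ?_
  simp only [Pi.add_apply]
  ring

lemma Bf_self (n : ℕ) (x : Fin (2*n) → ZMod 2) : Bf n x x = 0 := by
  unfold Bf
  refine Finset.sum_eq_zero fun i _ => ?_
  rw [mul_comm]
  exact zmod2_add_self _

theorem card_relation_B2 (n : ℕ) (hn : 2 ≤ n) (x : Fin (2*n) → ZMod 2) (hx : Q n x = 1) :
    Nat.card {x' : Fin (2*n) → ZMod 2 //
      Q n x' = 1 ∧ x' ≠ x ∧ Q n (x + x') = 0} = (2^(n-1) + 1) * (2^(n-1) - 1) := by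
  classical
  rw [Nat.card_eq_fintype_card, Fintype.card_subtype]
  set S : Finset (Fin (2*n) → ZMod 2) :=
    Finset.univ.filter (fun v => Q n v = 1 ∧ Bf n x v = 0) with hS
  set S0 : Finset (Fin (2*n) → ZMod 2) :=
    Finset.univ.filter (fun v => Q n v = 0 ∧ Bf n x v = 0) with hS0
  set K : Finset (Fin (2*n) → ZMod 2) :=
    Finset.univ.filter (fun v => Bf n x v = 0) with hK
  set K1 : Finset (Fin (2*n) → ZMod 2) :=
    Finset.univ.filter (fun v => Bf n x v = 1) with hK1
  -- the filter set is S.erase x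
  have hset : Finset.univ.filter
      (fun x' => Q n x' = 1 ∧ x' ≠ x ∧ Q n (x + x') = 0) = S.erase x := by
    ext v
    simp only [hS, Finset.mem_filter, Finset.mem_univ, true_and, Finset.mem_erase]
    constructor
    · rintro ⟨h1, h2, h3⟩
      refine ⟨h2, h1, ?_⟩
      have h4 := Q_add n x v
      rw [h3, hx, h1] at h4
      have h5 : (1:ZMod 2) + 1 = 0 := by decide
      rw [h5, zero_add] at h4
      exact h4.symm
    · rintro ⟨h2, h1, h3⟩
      refine ⟨h1, h2, ?_⟩
      rw [Q_add n x v, hx, h1, h3]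
      decide
  rw [hset]
  have hxS : x ∈ S := by
    simp only [hS, Finset.mem_filter, Finset.mem_univ, true_and]
    exact ⟨hx, Bf_self n x⟩
  rw [Finset.card_erase_of_mem hxS]
  -- S and S0 have the same cardinality
  have hSS0 : S.card = S0.card := by
    refine Finset.card_nbij' (· + x) (· + x) ?_ ?_ ?_ ?_
    · intro v hv
      simp only [hS, hS0, Finset.mem_coe, Finset.mem_filter, Finset.mem_univ, true_and] at hv ⊢
      obtain ⟨h1, h2⟩ := hv
      constructor
      · rw [add_comm, Q_add n x v, hx, h1, h2]; decide
      · rw [Bf_add_right, h2, Bf_self]; decide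
    · intro v hv
      simp only [hS, hS0, Finset.mem_coe, Finset.mem_filter, Finset.mem_univ, true_and] at hv ⊢
      obtain ⟨h1, h2⟩ := hv
      constructor
      · rw [add_comm, Q_add n x v, hx, h1, h2]; decide
      · rw [Bf_add_right, h2, Bf_self]; decide
    · intro v _; show v + x + x = v; rw [add_assoc, vadd_self, add_zero]
    · intro v _; show v + x + x = v; rw [add_assoc, vadd_self, add_zero]
  -- S ∪ S0 = K
  have hunion : S ∪ S0 = K := by
    ext v
    simp only [hS, hS0, hK, Finset.mem_union, Finset.mem_filter, Finset.mem_univ, true_and]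
    constructor
    · rintro (⟨_, h⟩ | ⟨_, h⟩) <;> exact h
    · intro h
      rcases zmod2_cases (Q n v) with h' | h'
      · exact Or.inr ⟨h', h⟩
      · exact Or.inl ⟨h', h⟩
  have hdisj : Disjoint S S0 := by
    refine Finset.disjoint_left.mpr fun v hv hv' => ?_
    simp only [hS, hS0, Finset.mem_filter, Finset.mem_univ, true_and] at hv hv'
    rw [hv.1] at hv'
    exact absurd hv'.1 (by decide)
  have hKsplit : K.card = S.card + S0.card := by
    rw [← hunion, Finset.card_union_of_disjoint hdisj]
  -- find w₀ with Bf x w₀ = 1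
  have hex : ∃ i : Fin n, x ⟨2*i.1, by have := i.2; omega⟩
      * x ⟨2*i.1+1, by have := i.2; omega⟩ = 1 := by
    by_contra h
    push_neg at h
    have : Q n x = 0 := Finset.sum_eq_zero fun i _ => (zmod2_not_one _).mp (h i)
    rw [this] at hx; exact absurd hx (by decide)
  obtain ⟨i, hi⟩ := hex
  set j : Fin (2*n) := ⟨2*i.1, by have := i.2; omega⟩ with hj
  set w0 : Fin (2*n) → ZMod 2 := Pi.single j 1 with hw0
  have hBw0 : Bf n x w0 = 1 := by
    unfold Bf
    rw [Finset.sum_eq_single i]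
    · have h1 : w0 ⟨2*i.1+1, by have := i.2; omega⟩ = 0 := by
        rw [hw0]; apply Pi.single_eq_of_ne
        simp only [hj, Fin.ext_iff, ne_eq]; omega
      have h2 : w0 ⟨2*i.1, by have := i.2; omega⟩ = 1 := by
        rw [hw0]
        have he : (⟨2*i.1, by have := i.2; omega⟩ : Fin (2*n)) = j := by
          simp [hj]
        rw [he]; exact Pi.single_eq_same j 1
      rw [h1, h2, mul_zero, mul_one, zero_add]
      exact zmod2_mul_one _ _ hi
    · intro k _ hk
      have h1 : w0 ⟨2*k.1+1, by have := k.2; omega⟩ = 0 := by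
        rw [hw0]; apply Pi.single_eq_of_ne
        simp only [hj, Fin.ext_iff, ne_eq]; omega
      have h2 : w0 ⟨2*k.1, by have := k.2; omega⟩ = 0 := by
        rw [hw0]; apply Pi.single_eq_of_ne
        simp only [hj, Fin.ext_iff, ne_eq]
        intro hh
        exact hk (Fin.ext (by omega))
      rw [h1, h2, mul_zero, mul_zero, add_zero]
    · intro h; exact absurd (Finset.mem_univ i) h
  -- K and K1 have same card
  have hKK1 : K.card = K1.card := by
    refine Finset.card_nbij' (· + w0) (· + w0) ?_ ?_ ?_ ?_
    · intro v hv
      simp only [hK, hK1, Finset.mem_coe, Finset.mem_filter, Finset.mem_univ, true_and] at hv ⊢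
      rw [Bf_add_right, hv, hBw0, zero_add]
    · intro v hv
      simp only [hK, hK1, Finset.mem_coe, Finset.mem_filter, Finset.mem_univ, true_and] at hv ⊢
      rw [Bf_add_right, hv, hBw0]; decide
    · intro v _; show v + w0 + w0 = v; rw [add_assoc, vadd_self, add_zero]
    · intro v _; show v + w0 + w0 = v; rw [add_assoc, vadd_self, add_zero]
  -- K ∪ K1 = univ
  have hKtot : K.card + K1.card = 2^(2*n) := by
    have h := Finset.card_filter_add_card_filter_not
      (s := (Finset.univ : Finset (Fin (2*n) → ZMod 2))) (p := fun v => Bf n x v = 0)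
    rw [Finset.card_univ] at h
    have hcard : Fintype.card (Fin (2*n) → ZMod 2) = 2^(2*n) := by
      rw [Fintype.card_fun]; simp
    rw [hcard] at h
    have hfe : Finset.univ.filter (fun v => ¬ Bf n x v = 0) = K1 := by
      ext v
      simp only [hK1, Finset.mem_filter, Finset.mem_univ, true_and]
      exact zmod2_not_zero (Bf n x v)
    rw [hfe] at h
    exact h
  -- arithmetic
  have hpow : 2^(2*n) = 4 * 2^(2*n-2) := by
    have h4 : 2^(2*n) = 2^(2*n-2) * 2^2 := by rw [← pow_add]; congr 1; omega
    rw [h4]; ring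
  have hScard : S.card = 2^(2*n-2) := by omega
  have hfac : 2^(2*n-2) = 2^(n-1) * 2^(n-1) := by
    rw [← pow_add]; congr 1; omega
  obtain ⟨b, hb⟩ : ∃ b, 2^(n-1) = b+1 :=
    ⟨2^(n-1)-1, by have := Nat.one_le_two_pow (n := n-1); omega⟩
  rw [hScard, hfac, hb]
  have e1 : (b+1)*(b+1) = b*b + 2*b + 1 := by ring
  have e2 : (b+1+1)*(b+1-1) = b*b + 2*b := by
    simp only [Nat.add_sub_cancel]; ring
  omega
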